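/- Let G be a countable group, F = (F_n) a Følner sequence in G, and A a subset of G with d̄_F(A) > 0. Then for every natural number m ≥ 1 there exist pairwise distinct elements h_1, …, h_m of A such that d̄_F(h_1⁻¹·A ∩ h_2⁻¹·A ∩ … ∩ h_m⁻¹·A) > 0; in particular, setting B = h_1⁻¹·A ∩ … ∩ h_m⁻¹·A and F_1 = {h_1, …, h_m}, one has F_1·B ⊆ A. -/

import Mathlib

open Filter Pointwise
open scoped Classical

/-- `F` is a (left) Følner sequence in the group `G`. -/
def IsFolner {G : Type*} [Group G] (F : ℕ → Finset G) : Prop :=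
  (∀ n, (F n).Nonempty) ∧
    Tendsto (fun n => (F n).card) atTop atTop ∧
    ∀ g : G, Tendsto
      (fun n => (((F n) ∩ (F n).image (g * ·)).card : ℝ) / ((F n).card : ℝ))
      atTop (nhds 1)

/-- The upper density of `A ⊆ G` with respect to the sequence `F`. -/
noncomputable def upperDensity {G : Type*} [Group G] (F : ℕ → Finset G) (A : Set G) : ℝ :=
  limsup (fun n => (((F n).filter (· ∈ A)).card : ℝ) / ((F n).card : ℝ)) atTop

section Helpers

set_option linter.unusedSectionVars false

variable {G : Type*} [Group G]

/-- Auxiliary: the density of `B` in the `n`-th Følner set. -/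
noncomputable def folDens (F : ℕ → Finset G) (B : Set G) (n : ℕ) : ℝ :=
  (((F n).filter (· ∈ B)).card : ℝ) / ((F n).card : ℝ)

lemma upperDensity_eq_limsup (F : ℕ → Finset G) (B : Set G) :
    upperDensity F B = limsup (folDens F B) atTop := rfl

lemma folDens_nonneg (F : ℕ → Finset G) (B : Set G) (n : ℕ) : 0 ≤ folDens F B n := by
  unfold folDens; positivity

lemma folDens_le_one (F : ℕ → Finset G) (B : Set G) (n : ℕ) : folDens F B n ≤ 1 := by
  unfold folDens
  rcases Nat.eq_zero_or_pos (F n).card with h | h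
  · simp [h]
  · rw [div_le_one (by exact_mod_cast h)]
    exact_mod_cast Finset.card_filter_le _ _

lemma nat_desc_bound (K : ℕ) : ∀ m : ℕ, K ^ (m+1) ≤ K.descFactorial (m+1) + (m+1)*(m+1)*K^m := by
  intro m
  induction m with
  | zero => simp [Nat.descFactorial]
  | succ m ih =>
    have hd : K * K.descFactorial (m+1) ≤ K.descFactorial (m+2) + (m+1) * K^(m+1) := by
      rcases le_or_gt (m+1) K with hK | hK
      · have : K * K.descFactorial (m+1)
            = (K - (m+1)) * K.descFactorial (m+1) + (m+1) * K.descFactorial (m+1) := by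
          rw [← Nat.add_mul]; congr 1; omega
        rw [this, Nat.descFactorial_succ]
        exact Nat.add_le_add_left (Nat.mul_le_mul_left _ (Nat.descFactorial_le_pow K (m+1))) _
      · have : K.descFactorial (m+1) = 0 := Nat.descFactorial_eq_zero_iff_lt.mpr hK
        rw [this, Nat.mul_zero]
        exact Nat.zero_le _
    calc K ^ (m+2) = K * K^(m+1) := by ring
    _ ≤ K * (K.descFactorial (m+1) + (m+1)*(m+1)*K^m) := Nat.mul_le_mul_left _ ih
    _ = K * K.descFactorial (m+1) + (m+1)*(m+1)*K^(m+1) := by ring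
    _ ≤ K.descFactorial (m+2) + (m+1) * K^(m+1) + (m+1)*(m+1)*K^(m+1) := by
        exact Nat.add_le_add_right hd _
    _ ≤ K.descFactorial (m+2) + (m+2)*(m+2)*K^(m+1) := by
        rw [Nat.add_assoc]
        refine Nat.add_le_add_left ?_ _
        have : (m+1) + (m+1)*(m+1) ≤ (m+2)*(m+2) := by nlinarith
        calc (m+1) * K^(m+1) + (m+1)*(m+1)*K^(m+1) = ((m+1) + (m+1)*(m+1)) * K^(m+1) := by ring
        _ ≤ (m+2)*(m+2)*K^(m+1) := Nat.mul_le_mul_right _ this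

lemma card_inj_filter (m K : ℕ) :
    (Finset.univ.filter (fun p : Fin m → Fin K => Function.Injective p)).card
      = K.descFactorial m := by
  classical
  rw [← Fintype.card_subtype,
    Fintype.card_congr (Equiv.subtypeInjectiveEquivEmbedding (Fin m) (Fin K)),
    Fintype.card_embedding_eq]
  simp

lemma card_translate (Fn : Finset G) (A : Set G) (h : G) :
    (Fn.filter (· ∈ A)).card + (Fn ∩ Fn.image (h * ·)).card ≤
    (Fn.filter (· ∈ h⁻¹ • A)).card + Fn.card := by
  classical
  set S := Fn ∩ Fn.image (h * ·) with hS
  have hSsub : S ⊆ Fn := Finset.inter_subset_left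
  have h1 : (S.filter (· ∈ A)).card ≤ (Fn.filter (· ∈ h⁻¹ • A)).card := by
    apply Finset.card_le_card_of_injOn (fun y => h⁻¹ * y)
    · intro y hy
      rw [Finset.mem_coe, Finset.mem_filter] at hy ⊢
      obtain ⟨hyS, hyA⟩ := hy
      rw [hS, Finset.mem_inter, Finset.mem_image] at hyS
      obtain ⟨-, x, hx, rfl⟩ := hyS
      constructor
      · simpa using hx
      · rw [Set.mem_inv_smul_set_iff, smul_eq_mul, mul_inv_cancel_left]
        exact hyA
    · intro a _ b _ hab
      exact mul_left_cancel hab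
  have h2 : Fn.filter (· ∈ A) ⊆ (S.filter (· ∈ A)) ∪ (Fn \ S) := by
    intro x hx
    rw [Finset.mem_filter] at hx
    rw [Finset.mem_union, Finset.mem_filter, Finset.mem_sdiff]
    by_cases hxS : x ∈ S
    · exact Or.inl ⟨hxS, hx.2⟩
    · exact Or.inr ⟨hx.1, hxS⟩
  have h3 : (Fn.filter (· ∈ A)).card ≤ (S.filter (· ∈ A)).card + (Fn.card - S.card) := by
    calc (Fn.filter (· ∈ A)).card ≤ ((S.filter (· ∈ A)) ∪ (Fn \ S)).card :=
          Finset.card_le_card h2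
    _ ≤ (S.filter (· ∈ A)).card + (Fn \ S).card := Finset.card_union_le _ _
    _ = (S.filter (· ∈ A)).card + (Fn.card - S.card) := by rw [Finset.card_sdiff_of_subset hSsub]
  have h4 : S.card ≤ Fn.card := Finset.card_le_card hSsub
  omega

lemma eventually_folDens_translate (F : ℕ → Finset G)
    (hne : ∀ n, (F n).Nonempty)
    (hfol : ∀ g : G, Tendsto
      (fun n => (((F n) ∩ (F n).image (g * ·)).card : ℝ) / ((F n).card : ℝ))
      atTop (nhds 1))
    (A : Set G) (h : G) {ε : ℝ} (hε : 0 < ε) :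
    ∀ᶠ n in atTop, folDens F A n - ε ≤ folDens F (h⁻¹ • A) n := by
  have := (hfol h).eventually (eventually_gt_nhds (show 1 - ε < 1 by linarith))
  filter_upwards [this] with n hn
  have hN : (0:ℝ) < ((F n).card : ℝ) := by
    exact_mod_cast Finset.card_pos.mpr (hne n)
  have key := card_translate (F n) A h
  have key' : (((F n).filter (· ∈ A)).card : ℝ) + (((F n) ∩ (F n).image (h * ·)).card : ℝ)
      ≤ (((F n).filter (· ∈ h⁻¹ • A)).card : ℝ) + ((F n).card : ℝ) := by exact_mod_cast key
  unfold folDens at *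
  rw [div_sub' (ne_of_gt hN), div_le_div_iff₀ hN hN]
  have hn2 : (1 - ε) * ((F n).card : ℝ) < (((F n) ∩ (F n).image (h * ·)).card : ℝ) :=
    (lt_div_iff₀ hN).mp hn
  nlinarith

lemma moment_ineq {ι : Type*} [Fintype ι] (Fn : Finset G) (B : ι → Set G) (m : ℕ) :
    (∑ i, ((Fn.filter (· ∈ B i)).card : ℝ)) ^ (m+1) / ((Fn.card : ℝ)) ^ m
      ≤ ∑ p : Fin (m+1) → ι, ((Fn.filter (fun x => ∀ j, x ∈ B (p j))).card : ℝ) := by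
  classical
  set f : G → ℝ := fun x => ∑ i, (if x ∈ B i then (1:ℝ) else 0) with hf
  have hA : ∑ i, ((Fn.filter (· ∈ B i)).card : ℝ) = ∑ x ∈ Fn, f x := by
    rw [Finset.sum_comm]
    congr 1
    ext i
    rw [Finset.sum_boole]
  have hC : ∀ x, f x ^ (m+1)
      = ∑ p : Fin (m+1) → ι, (if ∀ j, x ∈ B (p j) then (1:ℝ) else 0) := by
    intro x
    have : f x ^ (m+1) = ∏ _j : Fin (m+1), f x := by
      rw [Finset.prod_const]; simp
    rw [this, hf]
    rw [Finset.prod_univ_sum]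
    rw [Fintype.piFinset_univ]
    congr 1
    ext p
    rw [Finset.prod_boole]
    simp
  have hB := pow_sum_div_card_le_sum_pow (s := Fn) (f := f)
      (fun i _ => by positivity) m
  calc (∑ i, ((Fn.filter (· ∈ B i)).card : ℝ)) ^ (m+1) / ((Fn.card : ℝ)) ^ m
      = (∑ x ∈ Fn, f x) ^ (m+1) / (Fn.card : ℝ) ^ m := by rw [hA]
    _ ≤ ∑ x ∈ Fn, f x ^ (m+1) := by exact_mod_cast hB
    _ = ∑ p : Fin (m+1) → ι, ((Fn.filter (fun x => ∀ j, x ∈ B (p j))).card : ℝ) := by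
        simp_rw [hC]
        rw [Finset.sum_comm]
        congr 1
        ext p
        rw [Finset.sum_boole]

lemma exists_inj_tuple (Fn : Finset G) (hFn : Fn.Nonempty) (K m : ℕ) (B : Fin K → Set G)
    {c : ℝ} (hc : 0 < c) (hcK : ((m+1 : ℕ) : ℝ)^2 < c^(m+1)/2 * K)
    (hlow : ∀ i, c ≤ ((Fn.filter (· ∈ B i)).card : ℝ) / (Fn.card : ℝ)) :
    ∃ p : Fin (m+1) → Fin K, Function.Injective p ∧
      c^(m+1)/2 ≤ ((Fn.filter (fun x => ∀ j, x ∈ B (p j))).card : ℝ) / (Fn.card : ℝ) := by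
  classical
  set N : ℝ := (Fn.card : ℝ) with hNdef
  have hN : 0 < N := by
    have := Finset.card_pos.mpr hFn
    simp only [hNdef]
    exact_mod_cast this
  have hKpos : 0 < (K : ℝ) := by nlinarith [pow_pos hc (m+1), sq_nonneg ((m+1 : ℕ) : ℝ)]
  by_contra hno
  push_neg at hno
  have hsmall : ∀ p : Fin (m+1) → Fin K, Function.Injective p →
      ((Fn.filter (fun x => ∀ j, x ∈ B (p j))).card : ℝ) ≤ (c^(m+1)/2) * N := by
    intro p hp
    have h2 : ((Fn.filter (fun x => ∀ j, x ∈ B (p j))).card : ℝ) / N < c^(m+1)/2 := hno p hp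
    nlinarith [(div_lt_iff₀ hN).mp h2]
  have hlow' : ∀ i, c * N ≤ ((Fn.filter (· ∈ B i)).card : ℝ) := by
    intro i
    have := hlow i
    nlinarith [(le_div_iff₀ hN).mp this]
  have hsum : (K : ℝ) * (c * N) ≤ ∑ i, ((Fn.filter (· ∈ B i)).card : ℝ) := by
    calc (K : ℝ) * (c * N) = ∑ _i : Fin K, c * N := by
          rw [Finset.sum_const, Finset.card_univ, Fintype.card_fin, nsmul_eq_mul]
    _ ≤ _ := Finset.sum_le_sum fun i _ => hlow' i
  set T : ℝ := ∑ p : Fin (m+1) → Fin K, ((Fn.filter (fun x => ∀ j, x ∈ B (p j))).card : ℝ)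
    with hT
  have hTlow : ((K : ℝ) * c)^(m+1) * N ≤ T := by
    have h1 := moment_ineq Fn B m
    have h2 : (((K : ℝ) * (c * N)))^(m+1) ≤ (∑ i, ((Fn.filter (· ∈ B i)).card : ℝ))^(m+1) := by
      apply pow_le_pow_left₀ (by positivity) hsum
    have h3 : (((K : ℝ) * (c * N)))^(m+1) / N^m = ((K:ℝ)*c)^(m+1) * N := by
      field_simp
      ring
    calc ((K : ℝ) * c)^(m+1) * N = (((K : ℝ) * (c * N)))^(m+1) / N^m := h3.symm
    _ ≤ (∑ i, ((Fn.filter (· ∈ B i)).card : ℝ))^(m+1) / N^m := by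
        exact (div_le_div_iff_of_pos_right (pow_pos hN m)).mpr h2
    _ ≤ T := h1
  set injset := Finset.univ.filter (fun p : Fin (m+1) → Fin K => Function.Injective p)
    with hinjset
  have hsplit : T = (∑ p ∈ injset, ((Fn.filter (fun x => ∀ j, x ∈ B (p j))).card : ℝ))
      + (∑ p ∈ Finset.univ.filter (fun p : Fin (m+1) → Fin K => ¬ Function.Injective p),
          ((Fn.filter (fun x => ∀ j, x ∈ B (p j))).card : ℝ)) := by
    rw [hT, hinjset, Finset.sum_filter_add_sum_filter_not]
  have hinjbound : (∑ p ∈ injset, ((Fn.filter (fun x => ∀ j, x ∈ B (p j))).card : ℝ))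
      ≤ (K:ℝ)^(m+1) * ((c^(m+1)/2) * N) := by
    calc _ ≤ ∑ _p ∈ injset, (c^(m+1)/2) * N :=
          Finset.sum_le_sum fun p hp => hsmall p (Finset.mem_filter.mp hp).2
    _ = (injset.card : ℝ) * ((c^(m+1)/2) * N) := by rw [Finset.sum_const, nsmul_eq_mul]
    _ ≤ (K:ℝ)^(m+1) * ((c^(m+1)/2) * N) := by
        apply mul_le_mul_of_nonneg_right _ (by positivity)
        rw [hinjset, card_inj_filter]
        exact_mod_cast Nat.descFactorial_le_pow K (m+1)
  have hnoninjcard : ((Finset.univ.filter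
        (fun p : Fin (m+1) → Fin K => ¬ Function.Injective p)).card : ℝ)
      ≤ ((m+1 : ℕ) : ℝ)^2 * (K:ℝ)^m := by
    have h1 : (Finset.univ.filter (fun p : Fin (m+1) → Fin K => ¬ Function.Injective p)).card
        = K^(m+1) - K.descFactorial (m+1) := by
      have := Finset.card_filter_add_card_filter_not
        (s := (Finset.univ : Finset (Fin (m+1) → Fin K)))
        (p := fun p => Function.Injective p)
      rw [card_inj_filter] at this
      have hcu : (Finset.univ : Finset (Fin (m+1) → Fin K)).card = K^(m+1) := by
        simp [Finset.card_univ]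
      omega
    rw [h1]
    have h2 : K^(m+1) - K.descFactorial (m+1) ≤ (m+1)*(m+1)*K^m := by
      have := nat_desc_bound K m
      omega
    calc ((K^(m+1) - K.descFactorial (m+1) : ℕ) : ℝ) ≤ (((m+1)*(m+1)*K^m : ℕ) : ℝ) := by
          exact_mod_cast h2
    _ = ((m+1 : ℕ) : ℝ)^2 * (K:ℝ)^m := by push_cast; ring
  have hnoninj : (∑ p ∈ Finset.univ.filter (fun p : Fin (m+1) → Fin K => ¬ Function.Injective p),
        ((Fn.filter (fun x => ∀ j, x ∈ B (p j))).card : ℝ))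
      ≤ (((m+1 : ℕ) : ℝ)^2 * (K:ℝ)^m) * N := by
    calc _ ≤ ∑ _p ∈ Finset.univ.filter (fun p : Fin (m+1) → Fin K => ¬ Function.Injective p),
          N := Finset.sum_le_sum fun p _ => by
            exact_mod_cast Nat.cast_le.mpr (Finset.card_filter_le Fn _)
    _ = ((Finset.univ.filter (fun p : Fin (m+1) → Fin K => ¬ Function.Injective p)).card : ℝ)
          * N := by rw [Finset.sum_const, nsmul_eq_mul]
    _ ≤ _ := mul_le_mul_of_nonneg_right hnoninjcard hN.le
  have hfinal : ((K : ℝ) * c)^(m+1) * N ≤ (K:ℝ)^(m+1) * ((c^(m+1)/2) * N)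
      + (((m+1 : ℕ) : ℝ)^2 * (K:ℝ)^m) * N := by
    rw [hsplit] at hTlow
    linarith
  rw [mul_pow] at hfinal
  have hKm : (0:ℝ) < (K:ℝ)^m := pow_pos hKpos m
  have hKm1 : (K:ℝ)^(m+1) = (K:ℝ)^m * (K:ℝ) := pow_succ _ _
  have h5 : ((m+1 : ℕ) : ℝ)^2 * (K:ℝ)^m < c^(m+1)/2 * (K:ℝ)^(m+1) := by
    rw [hKm1]
    calc ((m+1 : ℕ) : ℝ)^2 * (K:ℝ)^m < (c^(m+1)/2 * K) * (K:ℝ)^m :=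
          mul_lt_mul_of_pos_right hcK hKm
    _ = c^(m+1)/2 * ((K:ℝ)^m * K) := by ring
  nlinarith [mul_lt_mul_of_pos_right h5 hN, hfinal]

end Helpers

theorem translates_wide_step {G : Type*} [Group G] [Countable G]
    (F : ℕ → Finset G) (hF : IsFolner F)
    (A : Set G) (hA : 0 < upperDensity F A) (m : ℕ) (hm : 1 ≤ m) :
    ∃ h : Fin m → G, Function.Injective h ∧ (∀ i, h i ∈ A) ∧
      0 < upperDensity F (⋂ i, (h i)⁻¹ • A) ∧
      (Set.range h) * (⋂ i, (h i)⁻¹ • A) ⊆ A := by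
  classical
  obtain ⟨hne, hcard, hfol⟩ := hF
  obtain ⟨m', rfl⟩ : ∃ m', m = m' + 1 := ⟨m - 1, by omega⟩
  set a := upperDensity F A with ha
  have hbddle : ∀ B : Set G, IsBoundedUnder (· ≤ ·) atTop (folDens F B) :=
    fun B => isBoundedUnder_of ⟨1, fun n => folDens_le_one F B n⟩
  have hcob : IsCoboundedUnder (· ≤ ·) atTop (folDens F A) :=
    IsBoundedUnder.isCoboundedUnder_le
      (isBoundedUnder_of ⟨0, fun n => folDens_nonneg F A n⟩)
  have hfreq : ∃ᶠ n in atTop, a/2 < folDens F A n := by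
    apply frequently_lt_of_lt_limsup hcob
    rw [← upperDensity_eq_limsup, ← ha]
    linarith
  -- A is infinite
  have hAinf : A.Infinite := by
    by_contra hinf
    rw [Set.not_infinite] at hinf
    have hfin := hinf
    obtain ⟨M, hM⟩ := exists_nat_gt (2 * (hfin.toFinset.card : ℝ) / a)
    have hev := hcard.eventually_ge_atTop M
    obtain ⟨n, hdn, hMn⟩ := (hfreq.and_eventually hev).exists
    have hNpos : (0:ℝ) < ((F n).card : ℝ) := by
      exact_mod_cast Finset.card_pos.mpr (hne n)
    have hsub : (F n).filter (· ∈ A) ⊆ hfin.toFinset := by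
      intro x hx
      rw [Set.Finite.mem_toFinset]
      exact (Finset.mem_filter.mp hx).2
    have h1 : folDens F A n ≤ (hfin.toFinset.card : ℝ) / ((F n).card : ℝ) := by
      unfold folDens
      exact (div_le_div_iff_of_pos_right hNpos).mpr
        (by exact_mod_cast Finset.card_le_card hsub)
    have h2 : a/2 < (hfin.toFinset.card : ℝ) / ((F n).card : ℝ) := lt_of_lt_of_le hdn h1
    have h3 : a/2 * ((F n).card : ℝ) < (hfin.toFinset.card : ℝ) := (lt_div_iff₀ hNpos).mp h2
    have h4 : 2 * (hfin.toFinset.card : ℝ) < M * a := by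
      have := (div_lt_iff₀ hA).mp hM
      linarith
    have h5 : (M : ℝ) ≤ ((F n).card : ℝ) := by exact_mod_cast hMn
    nlinarith
  let e := Set.Infinite.natEmbedding A hAinf
  set c : ℝ := a/4 with hc
  have hcpos : 0 < c := by rw [hc]; linarith
  obtain ⟨K, hK⟩ := exists_nat_gt (((m'+1 : ℕ) : ℝ)^2 / (c^(m'+1)/2))
  have hcK : ((m'+1 : ℕ) : ℝ)^2 < c^(m'+1)/2 * K := by
    have hp : (0:ℝ) < c^(m'+1)/2 := by positivity
    calc ((m'+1 : ℕ) : ℝ)^2 = (((m'+1 : ℕ) : ℝ)^2 / (c^(m'+1)/2)) * (c^(m'+1)/2) := by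
          field_simp
    _ < K * (c^(m'+1)/2) := by
        apply mul_lt_mul_of_pos_right hK hp
    _ = c^(m'+1)/2 * K := by ring
  set h' : Fin K → G := fun i => (e (i : ℕ) : G) with hh'
  have h'inj : Function.Injective h' := by
    intro i j hij
    have : e (i : ℕ) = e (j : ℕ) := Subtype.ext hij
    exact Fin.ext (e.injective this)
  have h'mem : ∀ i, h' i ∈ A := fun i => (e (i : ℕ)).2
  have hev : ∀ᶠ n in atTop, ∀ i : Fin K, folDens F A n - a/4 ≤ folDens F ((h' i)⁻¹ • A) n :=
    eventually_all.mpr fun i =>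
      eventually_folDens_translate F hne hfol A (h' i) (by linarith)
  have hfreq2 : ∃ᶠ n in atTop, ∀ i : Fin K, c ≤ folDens F ((h' i)⁻¹ • A) n := by
    refine (hfreq.and_eventually hev).mono ?_
    rintro n ⟨h1, h2⟩ i
    have := h2 i
    rw [hc]
    linarith
  have hfilter_eq : ∀ (p : Fin (m'+1) → Fin K) (n : ℕ),
      (F n).filter (· ∈ ⋂ j, (h' (p j))⁻¹ • A)
        = (F n).filter (fun x => ∀ j, x ∈ (h' (p j))⁻¹ • A) := by
    intro p n
    apply Finset.filter_congr
    intro x _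
    simp [Set.mem_iInter]
  have hfreq3 : ∃ᶠ n in atTop, ∃ p : Fin (m'+1) → Fin K, Function.Injective p ∧
      c^(m'+1)/2 ≤ folDens F (⋂ j, (h' (p j))⁻¹ • A) n := by
    refine hfreq2.mono ?_
    intro n hn
    obtain ⟨p, hpinj, hple⟩ :=
      exists_inj_tuple (F n) (hne n) K m' (fun i => (h' i)⁻¹ • A) hcpos hcK hn
    refine ⟨p, hpinj, ?_⟩
    unfold folDens
    rw [hfilter_eq p n]
    exact hple
  have hpigeon : ∃ p : Fin (m'+1) → Fin K, Function.Injective p ∧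
      ∃ᶠ n in atTop, c^(m'+1)/2 ≤ folDens F (⋂ j, (h' (p j))⁻¹ • A) n := by
    by_contra hcon
    push_neg at hcon
    have hev' : ∀ᶠ n in atTop, ∀ p : Fin (m'+1) → Fin K, Function.Injective p →
        ¬ (c^(m'+1)/2 ≤ folDens F (⋂ j, (h' (p j))⁻¹ • A) n) := by
      rw [eventually_all]
      intro p
      by_cases hp : Function.Injective p
      · have := hcon p hp
        exact this.mono fun n hn _ => not_le.mpr hn
      · exact Eventually.of_forall fun n h => absurd h hp
    obtain ⟨n, hn1, hn2⟩ := (hfreq3.and_eventually hev').exists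
    obtain ⟨p, hp1, hp2⟩ := hn1
    exact hn2 p hp1 hp2
  obtain ⟨p, hpinj, hpfreq⟩ := hpigeon
  refine ⟨fun j => h' (p j), h'inj.comp hpinj, fun j => h'mem _, ?_, ?_⟩
  · have hle : c^(m'+1)/2 ≤ upperDensity F (⋂ j, (h' (p j))⁻¹ • A) := by
      rw [upperDensity_eq_limsup]
      exact le_limsup_of_frequently_le hpfreq (hbddle _)
    have : (0:ℝ) < c^(m'+1)/2 := by positivity
    linarith
  · rintro x hx
    rw [Set.mem_mul] at hx
    obtain ⟨g, hg, y, hy, rfl⟩ := hx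
    obtain ⟨i, rfl⟩ := hg
    have := Set.mem_iInter.mp hy i
    rwa [Set.mem_inv_smul_set_iff, smul_eq_mul] at this
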